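/- Let Ω be a finite nonempty set, ρ a probability distribution on Ω, G a perturbation graph on Ω, and α ∈ [0,1]. For every distortion-free watermarking scheme 𝒫 of ρ with Type I error α(𝒫) ≤ α, the robust Type II error of 𝒫 with respect to G is at least 1 − V, where V = sup{ Σ_{y∈Ω} ρ(y)·x(y) : x : Ω → [0,1] such that Σ_{y∈in(z)} ρ(y)·x(y) ≤ α for every z ∈ Ω }. -/

import Mathlib

open Finset

noncomputable section

/-- The robust Type II error of a scheme `P` with respect to a perturbation
relation `E`: the probability that some allowed perturbation of `X`
(an element of `out(X)`) falls outside the rejection region `R`. -/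
def robustTypeII {Ω : Type*} [Fintype Ω] [DecidableEq Ω]
    (E : Ω → Ω → Prop) [DecidableRel E] (P : Ω × Finset Ω → ℝ) : ℝ :=
  ∑ p : Ω × Finset Ω, if ¬ (univ.filter (fun w => E p.1 w) ⊆ p.2) then P p else 0

/-- Every distortion-free watermarking scheme of `ρ` with Type I error `≤ α`
has robust Type II error (w.r.t. the perturbation graph `E`) at least `1 − V`,
where `V = sup { ∑_y ρ(y)·x(y) : x : Ω → [0,1], ∑_{y ∈ in(z)} ρ(y)·x(y) ≤ α ∀ z }`. -/
theorem stmt_9 {Ω : Type*} [Fintype Ω] [DecidableEq Ω] [Nonempty Ω]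
    (ρ : Ω → ℝ) (hρ0 : ∀ x, 0 ≤ ρ x) (hρ1 : ∑ x, ρ x = 1)
    (E : Ω → Ω → Prop) [DecidableRel E] (hrefl : ∀ u, E u u)
    (α : ℝ) (hα : α ∈ Set.Icc (0 : ℝ) 1)
    (P : Ω × Finset Ω → ℝ) (hP0 : ∀ p, 0 ≤ P p) (hP1 : ∑ p, P p = 1)
    (hmarg : ∀ x : Ω, (∑ R : Finset Ω, P (x, R)) = ρ x)
    (htypeI : ∀ y : Ω, (∑ p : Ω × Finset Ω, if y ∈ p.2 then P p else 0) ≤ α) :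
    1 - sSup {s : ℝ | ∃ x : Ω → ℝ, (∀ y, x y ∈ Set.Icc (0 : ℝ) 1) ∧
        (∀ z : Ω, (∑ y ∈ univ.filter (fun y => E y z), ρ y * x y) ≤ α) ∧
        s = ∑ y, ρ y * x y}
      ≤ robustTypeII E P := by
  classical
  set q : Ω → ℝ := fun y =>
    ∑ R : Finset Ω, if (univ.filter (fun w => E y w) ⊆ R) then P (y, R) else 0 with hq
  have hq0 : ∀ y, 0 ≤ q y := by
    intro y
    apply Finset.sum_nonneg
    intro R _
    split <;> simp [hP0]
  have hqρ : ∀ y, q y ≤ ρ y := by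
    intro y
    rw [← hmarg y]
    apply Finset.sum_le_sum
    intro R _
    split <;> simp [hP0]
  set x : Ω → ℝ := fun y => if ρ y = 0 then 0 else q y / ρ y with hx
  have hρx : ∀ y, ρ y * x y = q y := by
    intro y
    by_cases h : ρ y = 0
    · simp [hx, h]
      have := hqρ y
      have := hq0 y
      linarith [hqρ y, hq0 y, h ▸ hqρ y]
    · simp only [hx, if_neg h]
      field_simp
  have hx01 : ∀ y, x y ∈ Set.Icc (0 : ℝ) 1 := by
    intro y
    by_cases h : ρ y = 0
    · simp [hx, h]
    · have hpos : 0 < ρ y := lt_of_le_of_ne (hρ0 y) (Ne.symm h)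
      constructor
      · simp only [hx, if_neg h]
        exact div_nonneg (hq0 y) (hρ0 y)
      · simp only [hx, if_neg h]
        rw [div_le_one hpos]
        exact hqρ y
  have hconstr : ∀ z : Ω, (∑ y ∈ univ.filter (fun y => E y z), ρ y * x y) ≤ α := by
    intro z
    calc ∑ y ∈ univ.filter (fun y => E y z), ρ y * x y
        = ∑ y ∈ univ.filter (fun y => E y z), q y := by
          exact Finset.sum_congr rfl fun y _ => hρx y
      _ ≤ ∑ y ∈ univ.filter (fun y => E y z),
            ∑ R : Finset Ω, if z ∈ R then P (y, R) else 0 := by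
          apply Finset.sum_le_sum
          intro y hy
          simp only [Finset.mem_filter, Finset.mem_univ, true_and] at hy
          apply Finset.sum_le_sum
          intro R _
          by_cases hsub : univ.filter (fun w => E y w) ⊆ R
          · have hz : z ∈ R := hsub (by simp [hy])
            simp [hsub, hz]
          · simp only [if_neg hsub]
            split <;> simp [hP0]
      _ ≤ ∑ y : Ω, ∑ R : Finset Ω, if z ∈ R then P (y, R) else 0 := by
          apply Finset.sum_le_sum_of_subset_of_nonneg (Finset.filter_subset _ _)
          intro y _ _
          apply Finset.sum_nonneg
          intro R _
          split <;> simp [hP0]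
      _ = ∑ p : Ω × Finset Ω, if z ∈ p.2 then P p else 0 := by
          rw [Fintype.sum_prod_type]
      _ ≤ α := htypeI z
  set S := {s : ℝ | ∃ x : Ω → ℝ, (∀ y, x y ∈ Set.Icc (0 : ℝ) 1) ∧
        (∀ z : Ω, (∑ y ∈ univ.filter (fun y => E y z), ρ y * x y) ≤ α) ∧
        s = ∑ y, ρ y * x y} with hS
  have hmem : (∑ y, q y) ∈ S := by
    refine ⟨x, hx01, hconstr, ?_⟩
    exact (Finset.sum_congr rfl fun y _ => (hρx y)).symm
  have hbdd : BddAbove S := by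
    refine ⟨1, ?_⟩
    rintro s ⟨x', hx', _, rfl⟩
    calc ∑ y, ρ y * x' y ≤ ∑ y, ρ y * 1 := by
          apply Finset.sum_le_sum
          intro y _
          exact mul_le_mul_of_nonneg_left (hx' y).2 (hρ0 y)
      _ = 1 := by simp [hρ1]
  have hle : ∑ y, q y ≤ sSup S := le_csSup hbdd hmem
  have hsum : (∑ y, q y) + robustTypeII E P = 1 := by
    have h1 : (∑ y, q y) =
        ∑ p : Ω × Finset Ω,
          if (univ.filter (fun w => E p.1 w) ⊆ p.2) then P p else 0 := by
      rw [Fintype.sum_prod_type]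
    rw [h1, robustTypeII, ← Finset.sum_add_distrib, ← hP1]
    apply Finset.sum_congr rfl
    intro p _
    by_cases h : univ.filter (fun w => E p.1 w) ⊆ p.2 <;> simp [h]
  linarith
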